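/- For every nonempty word w over a finite alphabet Σ, the assembly index of w equals the minimal size of a straight-line program generating w, that is, ASI(w) = SLP(w). -/

import Mathlib

/-- `Avail x i u` : the word `u` is available at step `i` of the plan `x`,
i.e. `u` is a single letter or an earlier step's word. -/
def Avail {α : Type*} {t : ℕ} (x : Fin t → List α) (i : Fin t) (u : List α) : Prop :=
  (∃ a : α, u = [a]) ∨ ∃ j : Fin t, j < i ∧ x j = u

/-- `IsAssemblyPlan t x w` : `x : Fin t → List α` is an assembly plan for `w`,
each step being a concatenation of two available words, with the last step
equal to `w`; the empty plan (t = 0) is a plan only for single letters. -/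
def IsAssemblyPlan {α : Type*} (t : ℕ) (x : Fin t → List α) (w : List α) : Prop :=
  (∀ i : Fin t, ∃ u v : List α, Avail x i u ∧ Avail x i v ∧ x i = u ++ v) ∧
  (if t = 0 then ∃ a : α, w = [a] else ∃ i : Fin t, (i : ℕ) = t - 1 ∧ x i = w)

/-- The assembly index: minimal number of steps of an assembly plan for `w`. -/
noncomputable def ASI {α : Type*} (w : List α) : ℕ :=
  sInf {t | ∃ x : Fin t → List α, IsAssemblyPlan t x w}

/-- A straight-line program: nonterminals `0,…,m-1`, each with a rule that is
either a terminal `a ∈ Σ` or a concatenation of two earlier nonterminals. -/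
structure SLP (α : Type*) where
  m : ℕ
  rule : Fin m → α ⊕ (Fin m × Fin m)
  wf : ∀ i j l, rule i = Sum.inr (j, l) → j < i ∧ l < i

/-- The word derived from nonterminal `i`. -/
def SLP.eval {α : Type*} (G : SLP α) : Fin G.m → List α
  | i =>
    match h : G.rule i with
    | Sum.inl a => [a]
    | Sum.inr (j, l) =>
        have h1 : (j : ℕ) < (i : ℕ) := (G.wf i j l h).1
        have h2 : (l : ℕ) < (i : ℕ) := (G.wf i j l h).2
        G.eval j ++ G.eval l
termination_by i => (i : ℕ)

/-- The size of an SLP: the number of concatenation rules. -/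
def SLP.size {α : Type*} (G : SLP α) : ℕ :=
  (Finset.univ.filter (fun i : Fin G.m => (G.rule i).isRight)).card

/-- `G` generates `w` : the word derived from the last nonterminal is `w`. -/
def SLP.Generates {α : Type*} (G : SLP α) (w : List α) : Prop :=
  ∃ i : Fin G.m, (i : ℕ) = G.m - 1 ∧ G.eval i = w

/-- The minimal size of an SLP generating `w`. -/
noncomputable def SLPsize {α : Type*} (w : List α) : ℕ :=
  sInf {K | ∃ G : SLP α, G.Generates w ∧ G.size = K}

theorem SLP.eval_inl {α : Type*} (G : SLP α) (i : Fin G.m) (a : α)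
    (h : G.rule i = Sum.inl a) : G.eval i = [a] := by
  rw [SLP.eval]
  split
  · rename_i a' h'; rw [h] at h'; cases h'; rfl
  · rename_i j l h'; rw [h] at h'; cases h'

theorem SLP.eval_inr {α : Type*} (G : SLP α) (i j l : Fin G.m)
    (h : G.rule i = Sum.inr (j, l)) : G.eval i = G.eval j ++ G.eval l := by
  rw [SLP.eval]
  split
  · rename_i a' h'; rw [h] at h'; cases h'
  · rename_i j' l' h'; rw [h] at h'; cases h'; rfl

lemma plan_to_slp {α : Type*} [Fintype α] {w : List α} {t : ℕ} {x : Fin t → List α}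
    (hp : IsAssemblyPlan t x w) : ∃ G : SLP α, G.Generates w ∧ G.size = t := by
  rcases Nat.eq_zero_or_pos t with ht | ht
  · subst ht
    have h0 := hp.2
    rw [if_pos rfl] at h0
    obtain ⟨a, rfl⟩ := h0
    refine ⟨⟨1, fun _ => Sum.inl a, by intro i j l h; simp at h⟩, ⟨⟨0, one_pos⟩, rfl, ?_⟩, ?_⟩
    · exact SLP.eval_inl _ _ _ rfl
    · simp [SLP.size]
  · set n := Fintype.card α with hn
    set e := Fintype.equivFin α with he
    set Word : Fin (n + t) → List α := fun p =>
      if h : (p : ℕ) < n then [e.symm ⟨p, h⟩] else x ⟨(p : ℕ) - n, by omega⟩ with hWord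
    have key : ∀ i : Fin t, ∃ p q : Fin (n + t),
        (p : ℕ) < n + (i : ℕ) ∧ (q : ℕ) < n + (i : ℕ) ∧ Word p ++ Word q = x i := by
      intro i
      obtain ⟨u, v, hu, hv, huv⟩ := hp.1 i
      have mk : ∀ z : List α, Avail x i z → ∃ p : Fin (n + t), (p : ℕ) < n + (i : ℕ) ∧ Word p = z := by
        intro z hz
        rcases hz with ⟨a, rfl⟩ | ⟨j, hj, rfl⟩
        · refine ⟨⟨(e a : ℕ), by omega⟩, by simp [(e a).isLt]; omega, ?_⟩
          simp [hWord, (e a).isLt]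
          intro h; exact absurd h (not_le.mpr (e a).isLt)
        · refine ⟨⟨n + (j : ℕ), by omega⟩, by simp; exact hj, ?_⟩
          simp only [hWord]
          rw [dif_neg (by omega)]
          congr 1
          ext
          simp
      obtain ⟨p, hp1, hp2⟩ := mk u hu
      obtain ⟨q, hq1, hq2⟩ := mk v hv
      exact ⟨p, q, hp1, hq1, by rw [hp2, hq2, huv]⟩
    choose P Q hP hQ hPQ using key
    set G : SLP α :=
      ⟨n + t,
       fun i => if h : (i : ℕ) < n then Sum.inl (e.symm ⟨i, h⟩)
         else Sum.inr (P ⟨(i : ℕ) - n, by omega⟩, Q ⟨(i : ℕ) - n, by omega⟩),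
       by
        intro i j l h
        by_cases hi : (i : ℕ) < n
        · simp only [dif_pos hi] at h
          cases h
        · simp only [dif_neg hi] at h
          cases h
          constructor
          · have := hP ⟨(i : ℕ) - n, by omega⟩; simp at this ⊢; omega
          · have := hQ ⟨(i : ℕ) - n, by omega⟩; simp at this ⊢; omega⟩ with hG
    have hrule : ∀ i : Fin (n + t), G.rule i = if h : (i : ℕ) < n then Sum.inl (e.symm ⟨i, h⟩)
         else Sum.inr (P ⟨(i : ℕ) - n, by omega⟩, Q ⟨(i : ℕ) - n, by omega⟩) := fun _ => rfl
    have evalWord : ∀ k : ℕ, ∀ i : Fin (n + t), (i : ℕ) = k → G.eval i = Word i := by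
      intro k
      induction k using Nat.strong_induction_on with
      | _ k ih =>
        intro i hik
        by_cases h : (i : ℕ) < n
        · rw [SLP.eval_inl G i _ (by rw [hrule, dif_pos h])]
          simp [hWord, h]
        · set j : Fin t := ⟨(i : ℕ) - n, by omega⟩ with hj
          rw [SLP.eval_inr G i (P j) (Q j) (by rw [hrule, dif_neg h])]
          have e1 := ih (P j) (by have := hP j; simp [hj] at this ⊢; omega) (P j) rfl
          have e2 := ih (Q j) (by have := hQ j; simp [hj] at this ⊢; omega) (Q j) rfl
          rw [e1, e2, hPQ j]
          simp only [hWord]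
          rw [dif_neg h]
    have hm1 : ¬ (n + t - 1 < n) := by omega
    refine ⟨G, ⟨⟨n + t - 1, by show n + t - 1 < n + t; omega⟩, rfl, ?_⟩, ?_⟩
    · rw [evalWord _ _ rfl]
      simp only [hWord]
      rw [dif_neg hm1]
      have h2 := hp.2
      rw [if_neg (by omega : t ≠ 0)] at h2
      obtain ⟨i0, hi0, hxw⟩ := h2
      have : (⟨n + t - 1 - n, by omega⟩ : Fin t) = i0 := by ext; simp; omega
      rw [this, hxw]
    · show (Finset.univ.filter (fun i : Fin (n + t) => (G.rule i).isRight)).card = t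
      have : ∀ i : Fin (n + t), (G.rule i).isRight = decide (n ≤ (i : ℕ)) := by
        intro i
        rw [hrule]
        by_cases h : (i : ℕ) < n
        · rw [dif_pos h]; simp; omega
        · rw [dif_neg h]; simp; omega
      simp only [this]
      have : (Finset.univ.filter (fun i : Fin (n + t) => n ≤ (i : ℕ))).card = t := by
        have hcc : Fintype.card {x : Fin (n + t) // n ≤ (x : ℕ)} = Fintype.card (Fin t) :=
          Fintype.card_congr
          { toFun := fun p => ⟨(p : ℕ) - n, by have := p.1.isLt; have := p.2; omega⟩
            invFun := fun q => ⟨⟨n + (q : ℕ), by omega⟩, by simp⟩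
            left_inv := fun p => by
              have := p.2
              apply Subtype.ext; apply Fin.ext; simp; omega
            right_inv := fun q => by apply Fin.ext; simp }
        rw [← Fintype.card_subtype, hcc, Fintype.card_fin]
      simpa using this

lemma slp_to_plan {α : Type*} (G : SLP α) (w : List α) (hG : G.Generates w)
    (hw : ¬ ∃ a : α, w = [a]) : ∃ x : Fin G.size → List α, IsAssemblyPlan G.size x w := by
  classical
  set s : Finset (Fin G.m) := Finset.univ.filter (fun i => (G.rule i).isRight) with hs
  have hcard : s.card = G.size := rfl
  obtain ⟨iw, hiw, hevw⟩ := hG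
  have hiw_inr : ∃ j l, G.rule iw = Sum.inr (j, l) := by
    rcases h : G.rule iw with a | ⟨j, l⟩
    · exact absurd ⟨a, (SLP.eval_inl G iw a h ▸ hevw).symm⟩ hw
    · exact ⟨j, l, rfl⟩
  have hiw_mem : iw ∈ s := by
    obtain ⟨j, l, h⟩ := hiw_inr
    simp [hs, h]
  have hK : G.size ≠ 0 := by
    intro h0
    rw [← hcard, Finset.card_eq_zero] at h0
    rw [h0] at hiw_mem
    exact absurd hiw_mem (Finset.notMem_empty _)
  set o := s.orderIsoOfFin hcard with ho
  refine ⟨fun k => G.eval (o k), ?_, ?_⟩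
  · intro k
    have hmem : (o k : Fin G.m) ∈ s := (o k).2
    have hr : (G.rule (o k)).isRight := (Finset.mem_filter.mp hmem).2
    obtain ⟨⟨j, l⟩, hjl⟩ := Sum.isRight_iff.mp hr
    have avail : ∀ p : Fin G.m, p < (o k : Fin G.m) →
        Avail (fun k => G.eval (o k)) k (G.eval p) := by
      intro p hp
      rcases hrp : G.rule p with a | ⟨j', l'⟩
      · exact Or.inl ⟨a, SLP.eval_inl G p a hrp⟩
      · have hpmem : p ∈ s := by simp [hs, hrp]
        refine Or.inr ⟨o.symm ⟨p, hpmem⟩, ?_, ?_⟩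
        · have : (⟨p, hpmem⟩ : s) < o k := by exact hp
          have := o.symm.strictMono this
          simpa using this
        · simp
    refine ⟨G.eval j, G.eval l, avail j (G.wf _ _ _ hjl).1, avail l (G.wf _ _ _ hjl).2, ?_⟩
    exact SLP.eval_inr G _ j l hjl
  · rw [if_neg hK]
    set k0 : Fin G.size := ⟨G.size - 1, by omega⟩ with hk0
    refine ⟨k0, rfl, ?_⟩
    have hmax : (o k0 : Fin G.m) = iw := by
      have h1 : (o k0 : Fin G.m) ≤ iw := by
        apply Fin.le_def.mpr
        have := (o k0 : Fin G.m).isLt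
        omega
      have h2 : iw ≤ (o k0 : Fin G.m) := by
        have hle : o.symm ⟨iw, hiw_mem⟩ ≤ k0 := by
          apply Fin.le_def.mpr
          have := (o.symm ⟨iw, hiw_mem⟩).isLt
          simp [hk0]
          omega
        have := o.monotone hle
        rw [OrderIso.apply_symm_apply] at this
        exact this
      exact le_antisymm h1 h2
    show G.eval (o k0 : Fin G.m) = w
    rw [hmax, hevw]

lemma exists_plan {α : Type*} (w : List α) (hw : w ≠ []) :
    ∃ t : ℕ, ∃ x : Fin t → List α, IsAssemblyPlan t x w := by
  rcases Nat.lt_or_ge w.length 2 with hlen | hlen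
  · have h1 : w.length = 1 := by
      have := List.length_pos_iff.mpr hw
      omega
    obtain ⟨a, rfl⟩ := List.length_eq_one_iff.mp h1
    exact ⟨0, fun i => i.elim0, fun i => i.elim0, by rw [if_pos rfl]; exact ⟨a, rfl⟩⟩
  · set n := w.length with hn
    refine ⟨n - 1, fun i => w.take ((i : ℕ) + 2), ?_, ?_⟩
    · intro i
      have hi : (i : ℕ) < n - 1 := i.isLt
      have hstep : w.take ((i : ℕ) + 2) = w.take ((i : ℕ) + 1) ++ [w[(i : ℕ) + 1]] := by
        rw [List.take_succ]
        congr 1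
        rw [List.getElem?_eq_getElem (by omega)]
        rfl
      refine ⟨w.take ((i : ℕ) + 1), [w[(i : ℕ) + 1]], ?_, Or.inl ⟨_, rfl⟩, hstep⟩
      rcases Nat.eq_zero_or_pos (i : ℕ) with h0 | h0
      · left
        refine ⟨w[0], ?_⟩
        rw [h0]
        rw [List.take_one]
        rw [List.head?_eq_getElem?, List.getElem?_eq_getElem (by omega)]
        rfl
      · right
        refine ⟨⟨(i : ℕ) - 1, by omega⟩, ?_, ?_⟩
        · exact Fin.lt_def.mpr (by simp; omega)
        · simp only []
          congr 1
          simp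
          omega
    · rw [if_neg (by omega : n - 1 ≠ 0)]
      refine ⟨⟨n - 2, by omega⟩, by simp; omega, ?_⟩
      simp only []
      rw [show (n - 2) + 2 = n by omega]
      exact List.take_length


theorem asi_eq_slp {α : Type*} [Fintype α] (w : List α) (hw : w ≠ []) :
    ASI w = SLPsize w := by
  obtain ⟨t0, x0, hx0⟩ := exists_plan w hw
  have hplan_ne : {t | ∃ x : Fin t → List α, IsAssemblyPlan t x w}.Nonempty := ⟨t0, x0, hx0⟩
  have hASI_mem : ∃ x : Fin (ASI w) → List α, IsAssemblyPlan (ASI w) x w :=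
    Nat.sInf_mem hplan_ne
  obtain ⟨xA, hxA⟩ := hASI_mem
  obtain ⟨G0, hG0gen, hG0size⟩ := plan_to_slp hxA
  have hslp_le : SLPsize w ≤ ASI w := Nat.sInf_le ⟨G0, hG0gen, hG0size⟩
  have hslp_ne : {K | ∃ G : SLP α, G.Generates w ∧ G.size = K}.Nonempty :=
    ⟨ASI w, G0, hG0gen, hG0size⟩
  obtain ⟨G1, hG1gen, hG1size⟩ :
      ∃ G : SLP α, G.Generates w ∧ G.size = SLPsize w := Nat.sInf_mem hslp_ne
  have hasi_le : ASI w ≤ SLPsize w := by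
    by_cases h1 : ∃ a : α, w = [a]
    · have h0 : ASI w ≤ 0 := by
        apply Nat.sInf_le
        exact ⟨fun i => i.elim0, fun i => i.elim0, by rw [if_pos rfl]; exact h1⟩
      omega
    · obtain ⟨x1, hx1⟩ := slp_to_plan G1 w hG1gen h1
      calc ASI w ≤ G1.size := Nat.sInf_le ⟨x1, hx1⟩
        _ = SLPsize w := hG1size
  omega
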